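/- Let 0 < λ < 1 and n ≥ 1, and let a, b : ℤ → (0,∞) be n-periodic sequences (a_{i+n} = a_i and b_{i+n} = b_i for all i) such that a_i · b_{i+1} < λ² for all i ∈ ℤ, ∏_{i=0}^{n-1} a_i < λⁿ, and ∏_{i=0}^{n-1} b_i < λⁿ. Then there exists m ∈ ℤ that is simultaneously a forward λ-good index for a and a backward λ-good index for b, i.e., ∏_{i=0}^{k-1} a_{m+i} ≤ λ^k and ∏_{i=0}^{k-1} b_{m-i} ≤ λ^k for every k ≥ 1. -/

import Mathlib

open Finset

noncomputable def cumZ (f : ℤ → ℝ) (m : ℤ) : ℝ :=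
  (∑ i ∈ Finset.Ico (0:ℤ) m, f i) - ∑ i ∈ Finset.Ico m (0:ℤ), f i

lemma cumZ_zero (f : ℤ → ℝ) : cumZ f 0 = 0 := by simp [cumZ]

lemma cumZ_succ (f : ℤ → ℝ) (m : ℤ) : cumZ f (m + 1) = cumZ f m + f m := by
  unfold cumZ
  rcases le_or_gt 0 m with h | h
  · have e1 : Finset.Ico (0:ℤ) (m+1) = insert m (Finset.Ico 0 m) := by
      ext x; simp [Finset.mem_Ico]; omega
    rw [e1, Finset.sum_insert (by simp), Finset.Ico_eq_empty (by omega : ¬ m < 0),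
      Finset.Ico_eq_empty (by omega : ¬ m + 1 < 0)]
    simp; ring
  · have e1 : Finset.Ico m (0:ℤ) = insert m (Finset.Ico (m+1) 0) := by
      ext x; simp [Finset.mem_Ico]; omega
    rw [Finset.Ico_eq_empty (by omega : ¬ (0:ℤ) < m),
      Finset.Ico_eq_empty (by omega : ¬ (0:ℤ) < m + 1),
      e1, Finset.sum_insert (by simp)]
    simp

lemma cumZ_forward (f : ℤ → ℝ) (m : ℤ) (k : ℕ) :
    cumZ f (m + k) = cumZ f m + ∑ i ∈ Finset.range k, f (m + i) := by
  induction k with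
  | zero => simp
  | succ k ih =>
      have h : m + (↑(k+1) : ℤ) = (m + k) + 1 := by push_cast; ring
      rw [h, cumZ_succ, ih, Finset.sum_range_succ]
      ring

lemma cumZ_backward (f : ℤ → ℝ) (m : ℤ) (k : ℕ) :
    cumZ f (m + 1) = cumZ f (m + 1 - k) + ∑ i ∈ Finset.range k, f (m - i) := by
  induction k with
  | zero => simp
  | succ k ih =>
      have h1 : m + 1 - (↑(k+1):ℤ) = (m - k) := by push_cast; ring
      have h2 : m + 1 - (↑k:ℤ) = (m - k) + 1 := by ring
      rw [ih, h1, h2, cumZ_succ, Finset.sum_range_succ]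
      ring

lemma cumZ_period (f : ℤ → ℝ) (n : ℕ) (hp : ∀ i : ℤ, f (i + n) = f i) (m : ℤ) :
    cumZ f (m + n) = cumZ f m + cumZ f n := by
  have step : ∀ x : ℤ, cumZ f (x + 1 + n) - cumZ f (x + 1) = cumZ f (x + n) - cumZ f x := by
    intro x
    have e1 : x + 1 + (n:ℤ) = (x + n) + 1 := by ring
    rw [e1, cumZ_succ, cumZ_succ, hp x]
    ring
  have key : ∀ m : ℤ, cumZ f (m + n) - cumZ f m = cumZ f n := by
    intro m
    induction m using Int.induction_on with
    | zero => simp [cumZ_zero]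
    | succ i ih => rw [step i]; exact ih
    | pred i ih =>
        have := step (-(i:ℤ) - 1)
        rw [show -(i:ℤ) - 1 + 1 = -(i:ℤ) by ring] at this
        rw [← this]; exact ih
  linarith [key m]

lemma drift_iter (R : ℤ → ℝ) (c : ℤ) (δ : ℝ) (h : ∀ m, R (m + c) = R m + δ) :
    ∀ (t : ℕ) (x : ℤ), R (x + t * c) = R x + t * δ := by
  intro t
  induction t with
  | zero => simp
  | succ t ih =>
      intro x
      have e1 : x + ((t:ℤ)+1) * c = (x + t * c) + c := by ring
      push_cast
      rw [e1, h, ih]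
      push_cast; ring

/-- The 'good point' lemma (Lemma 4.2) in sequence form: for `n`-periodic positive
sequences `a`, `b` with `a i * b (i+1) < λ²` and products over the period `< λⁿ`,
some index `m` is simultaneously forward `λ`-good for `a` and backward `λ`-good for `b`. -/
theorem exists_forward_and_backward_good_index (lam : ℝ) (hlam0 : 0 < lam) (hlam1 : lam < 1)
    (n : ℕ) (hn : 1 ≤ n) (a b : ℤ → ℝ)
    (ha : ∀ i : ℤ, 0 < a i) (hb : ∀ i : ℤ, 0 < b i)
    (hap : ∀ i : ℤ, a (i + n) = a i) (hbp : ∀ i : ℤ, b (i + n) = b i)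
    (hdom : ∀ i : ℤ, a i * b (i + 1) < lam ^ 2)
    (hproda : ∏ i ∈ Finset.range n, a i < lam ^ n)
    (hprodb : ∏ i ∈ Finset.range n, b i < lam ^ n) :
    ∃ m : ℤ, ∀ k : ℕ, 1 ≤ k →
      (∏ i ∈ Finset.range k, a (m + i) ≤ lam ^ k) ∧
      (∏ i ∈ Finset.range k, b (m - i) ≤ lam ^ k) := by
  set L : ℝ := Real.log lam with hL
  set al : ℤ → ℝ := fun i => Real.log (a i) with hal
  set be : ℤ → ℝ := fun i => Real.log (b i) with hbe
  set R : ℤ → ℝ := fun m => cumZ al m - m * L with hRdef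
  set Q : ℤ → ℝ := fun m => cumZ be m - m * L with hQdef
  have hn' : (0:ℤ) < n := by exact_mod_cast hn
  -- period sums
  have hcn : ∀ (f : ℤ → ℝ), cumZ f n = ∑ i ∈ Finset.range n, f i := by
    intro f
    have := cumZ_forward f 0 n
    rw [zero_add, cumZ_zero, zero_add] at this
    rw [this]
    exact Finset.sum_congr rfl fun i _ => by rw [zero_add]
  have hdela : cumZ al n - n * L < 0 := by
    have h1 : cumZ al n = Real.log (∏ i ∈ Finset.range n, a i) := by
      rw [hcn, Real.log_prod (s := Finset.range n) (f := fun i : ℕ => a i) (fun i _ => (ha i).ne')]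
    have h2 : Real.log (∏ i ∈ Finset.range n, a i) < Real.log (lam ^ n) :=
      Real.log_lt_log (Finset.prod_pos fun i _ => ha i) hproda
    rw [Real.log_pow] at h2
    rw [h1]; push_cast; linarith
  have hdelb : cumZ be n - n * L < 0 := by
    have h1 : cumZ be n = Real.log (∏ i ∈ Finset.range n, b i) := by
      rw [hcn, Real.log_prod (s := Finset.range n) (f := fun i : ℕ => b i) (fun i _ => (hb i).ne')]
    have h2 : Real.log (∏ i ∈ Finset.range n, b i) < Real.log (lam ^ n) :=
      Real.log_lt_log (Finset.prod_pos fun i _ => hb i) hprodb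
    rw [Real.log_pow] at h2
    rw [h1]; push_cast; linarith
  set da : ℝ := cumZ al n - n * L with hda
  set db : ℝ := cumZ be n - n * L with hdb
  -- drifts
  have hdrifta : ∀ m : ℤ, R (m + n) = R m + da := by
    intro m
    simp only [hRdef, hda]
    rw [cumZ_period al n (fun i => by simp only [hal]; rw [hap i]) m]
    push_cast; ring
  have hdriftb : ∀ m : ℤ, Q (m + n) = Q m + db := by
    intro m
    simp only [hQdef, hdb]
    rw [cumZ_period be n (fun i => by simp only [hbe]; rw [hbp i]) m]
    push_cast; ring
  -- domination: al i + be (i+1) < 2L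
  have hd2 : ∀ i : ℤ, al i + be (i + 1) < 2 * L := by
    intro i
    have h1 : Real.log (a i * b (i + 1)) < Real.log (lam ^ 2) :=
      Real.log_lt_log (mul_pos (ha i) (hb (i + 1))) (hdom i)
    rw [Real.log_mul (ha i).ne' (hb (i+1)).ne', Real.log_pow] at h1
    simp only [hal, hbe, hL]
    push_cast at h1 ⊢; linarith
  -- G strictly decreasing
  have hG : StrictAnti (fun i : ℤ => R i + Q (i + 1)) := by
    apply strictAnti_int_of_succ_lt
    intro i
    simp only [hRdef, hQdef]
    have e1 : i + 1 + 1 = (i + 1) + 1 := by ring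
    rw [e1, cumZ_succ al i, cumZ_succ be (i + 1)]
    have := hd2 i
    push_cast
    nlinarith [hd2 i]
  -- step 1: max of R over a period
  obtain ⟨m₀, hm₀mem, hm₀max⟩ :=
    Finset.exists_max_image (Finset.Icc (0:ℤ) ((n:ℤ) - 1)) R ⟨0, by simp [Finset.mem_Icc]; omega⟩
  rw [Finset.mem_Icc] at hm₀mem
  have hm₀ : ∀ j : ℤ, 0 ≤ j → R j ≤ R m₀ := by
    intro j hj
    set t : ℕ := (j / n).toNat with htd
    have ht : (t:ℤ) = j / n := Int.toNat_of_nonneg (Int.ediv_nonneg hj hn'.le)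
    have hem := Int.emod_add_mul_ediv j n
    have hj₀1 : 0 ≤ j % n := Int.emod_nonneg j hn'.ne'
    have hj₀2 : j % n < n := Int.emod_lt_of_pos j hn'
    have htn : (t:ℤ) * n = n * (j / n) := by rw [ht]; ring
    have hjeq : j = j % n + t * n := by omega
    have hiter := drift_iter R n da hdrifta t (j % n)
    have hmem : j % n ∈ Finset.Icc (0:ℤ) ((n:ℤ) - 1) := by
      rw [Finset.mem_Icc]; omega
    have h1 : R (j % n) ≤ R m₀ := hm₀max _ hmem
    have h2 : (t:ℝ) * da ≤ 0 :=
      mul_nonpos_of_nonneg_of_nonpos (by positivity) hdela.le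
    rw [hjeq, hiter]
    linarith
  -- step 2: min of Q over backward window ending at c := m₀ + 1
  set c : ℤ := m₀ + 1 with hc
  obtain ⟨js, hjsmem, hjsmin⟩ :=
    Finset.exists_min_image (Finset.Icc (c - n + 1) c) Q ⟨c, by rw [Finset.mem_Icc]; omega⟩
  rw [Finset.mem_Icc] at hjsmem
  have hjs : ∀ j : ℤ, j ≤ c → Q js ≤ Q j := by
    intro j hj
    set t : ℕ := ((c - j) / n).toNat with htd
    have ht : (t:ℤ) = (c - j) / n :=
      Int.toNat_of_nonneg (Int.ediv_nonneg (by omega) hn'.le)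
    have hem := Int.emod_add_mul_ediv (c - j) n
    have hr1 : 0 ≤ (c - j) % n := Int.emod_nonneg _ hn'.ne'
    have hr2 : (c - j) % n < n := Int.emod_lt_of_pos _ hn'
    have hiter := drift_iter Q n db hdriftb t j
    have htn : (t:ℤ) * n = n * ((c - j) / n) := by rw [ht]; ring
    have hmem : j + t * n ∈ Finset.Icc (c - n + 1) c := by
      rw [Finset.mem_Icc]; omega
    have h1 : Q js ≤ Q (j + t * n) := hjsmin _ hmem
    have h2 : (t:ℝ) * db ≤ 0 :=
      mul_nonpos_of_nonneg_of_nonpos (by positivity) hdelb.le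
    rw [hiter] at h1
    linarith
  -- the good index
  refine ⟨js - 1, ?_⟩
  set m : ℤ := js - 1 with hm
  have hmjs : m + 1 = js := by omega
  have hmle : m ≤ m₀ := by omega
  -- strict forward claim in the window
  have hsub : ∀ j : ℤ, m < j → j ≤ m₀ → R j < R m := by
    intro j h1 h2
    have hg := hG h1
    simp only at hg
    have hq : Q (m + 1) ≤ Q (j + 1) := by
      rw [hmjs]; exact hjs (j + 1) (by omega)
    linarith
  have hforall : ∀ j : ℤ, m < j → R j ≤ R m := by
    intro j h1
    rcases le_or_gt j m₀ with h2 | h2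
    · exact (hsub j h1 h2).le
    · have h3 : R j ≤ R m₀ := hm₀ j (by omega)
      rcases eq_or_lt_of_le hmle with he | hlt
      · rw [← he] at h3; exact h3
      · exact h3.trans (hsub m₀ hlt le_rfl).le
  have hback : ∀ k : ℕ, Q (m + 1) ≤ Q (m + 1 - k) := by
    intro k
    rw [hmjs]
    exact hjs _ (by omega)
  intro k hk
  have hkpos : (0:ℤ) < k := by exact_mod_cast hk
  constructor
  · -- forward for a
    have h1 : R (m + k) ≤ R m := hforall (m + k) (by omega)
    simp only [hRdef] at h1
    have h2 : ∑ i ∈ Finset.range k, al (m + i) ≤ k * L := by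
      have h3 := cumZ_forward al m k
      push_cast at h1
      linarith
    have h4 : ∏ i ∈ Finset.range k, a (m + i) =
        Real.exp (∑ i ∈ Finset.range k, al (m + i)) := by
      rw [Real.exp_sum]
      exact Finset.prod_congr rfl fun i _ => (Real.exp_log (ha _)).symm
    have h5 : lam ^ k = Real.exp ((k:ℝ) * L) := by
      rw [Real.exp_nat_mul, Real.exp_log hlam0]
    rw [h4, h5]
    exact Real.exp_le_exp.mpr h2
  · -- backward for b
    have h1 : Q (m + 1) ≤ Q (m + 1 - k) := hback k
    simp only [hQdef] at h1
    have h2 : ∑ i ∈ Finset.range k, be (m - i) ≤ k * L := by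
      have h3 := cumZ_backward be m k
      push_cast at h1
      linarith
    have h4 : ∏ i ∈ Finset.range k, b (m - i) =
        Real.exp (∑ i ∈ Finset.range k, be (m - i)) := by
      rw [Real.exp_sum]
      exact Finset.prod_congr rfl fun i _ => (Real.exp_log (hb _)).symm
    have h5 : lam ^ k = Real.exp ((k:ℝ) * L) := by
      rw [Real.exp_nat_mul, Real.exp_log hlam0]
    rw [h4, h5]
    exact Real.exp_le_exp.mpr h2
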